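/- Let q > 1 be real, g even, and π₁,…,π_{2g} distinct complex numbers of absolute value q^{1/2} with π_{i+g} = q/π_i (indices mod 2g). Suppose ∏_{i=1}^{g} π_i = q^{g/2} and suppose there exists a permutation group acting on indices as the full S_g on {1,…,g} extended compatibly with i ↦ i+g, permuting the π_i. If I ⊆ {1,…,2g} with 0 < |I| = 2k < g satisfies ∏_{i∈I} π_i = q^k and no i ∈ I has i+g mod 2g ∈ I, then a contradiction follows; hence any such relation with |I| < g forces I to contain a pair {i, i+g mod 2g}. -/

import Mathlib

/-- The action of `(ε, σ) ∈ μ₂ × S_g` on `{1,…,2g} = Fin g ⊕ Fin g`: `σ` acts diagonally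
and `ε = true` further applies the involution `i ↦ i + g mod 2g`. -/
def weilAct (g : ℕ) (ε : Bool) (σ : Equiv.Perm (Fin g)) : Equiv.Perm (Fin g ⊕ Fin g) :=
  (Equiv.sumCongr σ σ).trans (if ε then Equiv.sumComm (Fin g) (Fin g) else Equiv.refl _)

/-- Let `q > 1` be real, `g` even, and `π₁,…,π_{2g}` distinct complex
numbers of absolute value `q^{1/2}` with `π_{i+g} = q/π_i`. Suppose `∏_{i=1}^{g} π_i =
q^{g/2}`, and the full group `μ₂ × S_g` permutes the `π_i` compatibly with its action on
indices (preserving all multiplicative relations with powers of `q`). If `I ⊆ {1,…,2g}`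
with `0 < |I| = 2k < g` satisfies `∏_{i∈I} π_i = q^k` and no `i ∈ I` has
`i + g mod 2g ∈ I`, then a contradiction follows. -/
theorem stmt16 (g m : ℕ) (hgm : g = 2 * m) (q : ℝ) (hq : 1 < q)
    (π : Fin g ⊕ Fin g → ℂ)
    (hinj : Function.Injective π)
    (habs : ∀ i, ‖π i‖ = Real.sqrt q)
    (hconj : ∀ i : Fin g, π (Sum.inr i) = (q : ℂ) / π (Sum.inl i))
    (hprod : (∏ i : Fin g, π (Sum.inl i)) = (q : ℂ) ^ m)
    (hGal : ∀ (ε : Bool) (σ : Equiv.Perm (Fin g)) (f : Fin g ⊕ Fin g → ℕ) (k : ℕ),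
      (∏ i, π i ^ f i) = (q : ℂ) ^ k → (∏ i, π (weilAct g ε σ i) ^ f i) = (q : ℂ) ^ k)
    (I : Finset (Fin g ⊕ Fin g)) (k : ℕ)
    (hcard : I.card = 2 * k) (hpos : 0 < 2 * k) (hlt : 2 * k < g)
    (hrel : (∏ i ∈ I, π i) = (q : ℂ) ^ k)
    (hnopair : ∀ i ∈ I, Equiv.sumComm (Fin g) (Fin g) i ∉ I) :
    False := by
  have hq0 : (0:ℝ) < q := one_pos.trans hq
  have hπne : ∀ i, π i ≠ 0 := by
    intro i h
    have h1 : ‖π i‖ ≠ 0 := by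
      rw [habs i]; positivity
    exact h1 (by simp [h])
  have hIne : I.Nonempty := Finset.card_pos.mp (hcard ▸ hpos)
  obtain ⟨a₀, ha₀⟩ := hIne
  set J : Finset (Fin g) := I.image (Sum.elim id id) with hJ
  have hJcard : J.card < g :=
    lt_of_le_of_lt (le_trans Finset.card_image_le (le_of_eq hcard)) hlt
  have hex : ∃ j : Fin g, j ∉ J := by
    by_contra h
    push_neg at h
    have heq : J = Finset.univ := Finset.eq_univ_iff_forall.mpr h
    rw [heq, Finset.card_univ, Fintype.card_fin] at hJcard
    exact lt_irrefl _ hJcard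
  obtain ⟨j, hj⟩ := hex
  set i₀ : Fin g := Sum.elim id id a₀ with hi₀
  have hi₀J : i₀ ∈ J := Finset.mem_image_of_mem _ ha₀
  have hji₀ : j ≠ i₀ := fun h => hj (h ▸ hi₀J)
  set σ := Equiv.swap i₀ j with hσ
  -- all elements of I other than a₀ are fixed by Sum.map σ σ
  have hfix : ∀ a ∈ I, a ≠ a₀ → Sum.map σ σ a = a := by
    intro a ha hne
    have hxj : Sum.elim id id a ≠ j := fun h => hj (h ▸ Finset.mem_image_of_mem _ ha)
    have hxi : Sum.elim id id a ≠ i₀ := by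
      intro h
      rcases ha' : a with x | x <;> rcases ha₀' : a₀ with y | y <;>
        rw [ha'] at h ha hne <;> rw [ha₀'] at hne <;>
        simp only [Sum.elim_inl, Sum.elim_inr, id_eq] at h <;>
        rw [hi₀, ha₀'] at h <;>
        simp only [Sum.elim_inl, Sum.elim_inr, id_eq] at h <;> subst h
      · exact hne rfl
      · exact hnopair _ ha (by simpa using ha₀' ▸ ha₀)
      · exact hnopair _ (ha₀' ▸ ha₀) (by simpa using ha)
      · exact hne rfl
    rcases a with x | x <;>
      simp only [Sum.elim_inl, Sum.elim_inr, id_eq] at hxj hxi <;>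
      simp [hσ, Equiv.swap_apply_of_ne_of_ne hxi hxj]
  -- turn the relation into the exponent form and apply the Galois hypothesis
  set f : Fin g ⊕ Fin g → ℕ := fun i => if i ∈ I then 1 else 0 with hf
  have hfprod : ∀ p : Fin g ⊕ Fin g → ℂ, (∏ i, p i ^ f i) = ∏ i ∈ I, p i := by
    intro p
    simp only [hf, pow_ite, pow_one, pow_zero]
    rw [Finset.prod_ite_mem, Finset.univ_inter]
  have h1 : (∏ i, π i ^ f i) = (q : ℂ) ^ k := by rw [hfprod]; exact hrel
  have h2 := hGal false σ f k h1
  have h2' : (∏ i ∈ I, π (Sum.map σ σ i)) = (q : ℂ) ^ k := by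
    rw [← hfprod (fun i => π (Sum.map σ σ i))]
    have hw : ∀ i, weilAct g false σ i = Sum.map σ σ i := by
      intro i; simp [weilAct]
    simpa [hw] using h2
  -- compare the two relations
  rw [← Finset.mul_prod_erase I _ ha₀] at hrel h2'
  have herase : (∏ x ∈ I.erase a₀, π (Sum.map σ σ x)) = ∏ x ∈ I.erase a₀, π x := by
    apply Finset.prod_congr rfl
    intro x hx
    rw [hfix x (Finset.mem_of_mem_erase hx) (Finset.ne_of_mem_erase hx)]
  rw [herase] at h2'
  have hP : (∏ x ∈ I.erase a₀, π x) ≠ 0 := Finset.prod_ne_zero_iff.mpr fun i _ => hπne i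
  have hkey : π (Sum.map σ σ a₀) = π a₀ := by
    have := h2'.trans hrel.symm
    exact mul_right_cancel₀ hP this
  have heq := hinj hkey
  rcases ha₀' : a₀ with x | x <;> rw [ha₀'] at heq <;>
    simp only [Sum.map_inl, Sum.map_inr, Sum.inl.injEq, Sum.inr.injEq] at heq <;>
  · have hx : i₀ = x := by rw [hi₀, ha₀']; rfl
    rw [hσ, ← hx, Equiv.swap_apply_left] at heq
    exact hji₀ heq
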